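/- Let G be a k-graph on n vertices with δ_{k−1}(G) ≥ εn, and fix a (k−2)-set f ⊆ V(G). For every η > 0 there exist μ = μ(η, ε) > 0 and n₀ such that if n > n₀, then the set 𝒩 = ∪_{w ∈ V∖f} N(fw)^(k−1) is a (μ, η)-good subset of V^(k−1). In fact one may take μ = (ε/k)·η. -/

import Mathlib

open Finset

/-- The neighbourhood `N(e) = {v : e ∪ {v} ∈ E}` of a set `e` in a hypergraph `G`. -/
def nbhd {α : Type*} [Fintype α] [DecidableEq α] (G : Finset (Finset α))
    (e : Finset α) : Finset α :=
  Finset.univ.filter fun v => insert v e ∈ G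

/-- `A` is a `(μ, η)`-good subset of the `(k-1)`-subsets of the finite set `V`. -/
def IsGood {α : Type*} [DecidableEq α] (V : Finset α) (k : ℕ) (μ η : ℝ)
    (A : Finset (Finset α)) : Prop :=
  ∃ (t : ℕ) (P : Fin t → Finset α),
    (∀ i, P i ⊆ V) ∧
    (∀ i j, i ≠ j → Disjoint (P i) (P j)) ∧
    (∀ i, ∀ e ⊆ P i, e.card = k - 1 → e ∈ A) ∧
    (∀ i, μ * (V.card : ℝ) ≤ ((P i).card : ℝ)) ∧
    (((V \ Finset.univ.biUnion P).card : ℝ) ≤ η * (V.card : ℝ))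

set_option maxHeartbeats 1000000 in
/-- Claim 4.5: let `G` be a `k`-graph on `n` vertices with minimum codegree at least
`εn`, and fix a `(k-2)`-set `f`. For every `η > 0` there is `n₀` such that if
`n > n₀`, the set `𝒩 = ⋃_{w ∉ f} N(fw)^(k-1)` of all `(k-1)`-sets contained in some
neighbourhood `N(f ∪ {w})` is a `(μ, η)`-good subset of the `(k-1)`-subsets of the
vertex set, with `μ = (ε/k)·η`. -/
theorem link_union_good (k : ℕ) (hk : 3 ≤ k) (ε : ℝ) (hε : 0 < ε) (η : ℝ)
    (hη : 0 < η) :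
    ∃ n₀ : ℕ, ∀ (α : Type) [Fintype α] [DecidableEq α]
      (G : Finset (Finset α)), (∀ e ∈ G, e.card = k) →
      n₀ < Fintype.card α →
      (∀ e : Finset α, e.card = k - 1 →
        ε * (Fintype.card α : ℝ) ≤ ((nbhd G e).card : ℝ)) →
      ∀ f : Finset α, f.card = k - 2 →
      IsGood (Finset.univ : Finset α) k ((ε / k) * η) η
        ((Finset.univ.powersetCard (k - 1)).filter fun e =>
          ∃ w ∉ f, e ⊆ nbhd G (insert w f)) := by
  refine ⟨⌈(k : ℝ)^2 * (ε + η) / (ε * η)⌉₊ + k, ?_⟩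
  intro α _ _ G hG hn hdeg f hf
  set n : ℕ := Fintype.card α with hndef
  set μ : ℝ := (ε / k) * η with hμdef
  have hk0 : (0:ℝ) < k := by positivity
  have hμpos : 0 < μ := by positivity
  have hμk : (k:ℝ) * μ = ε * η := by rw [hμdef]; field_simp
  -- basic size facts
  have hNceil : ((k : ℝ)^2 * (ε + η) / (ε * η)) ≤ (⌈(k : ℝ)^2 * (ε + η) / (ε * η)⌉₊ : ℝ) :=
    Nat.le_ceil _
  have hnn : (⌈(k : ℝ)^2 * (ε + η) / (ε * η)⌉₊ : ℝ) + k ≤ (n : ℝ) := by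
    have : (⌈(k : ℝ)^2 * (ε + η) / (ε * η)⌉₊ + k : ℕ) ≤ n := le_of_lt hn
    exact_mod_cast this
  have hkn : (k : ℝ) ≤ n := by
    have h0 : (0:ℝ) ≤ (⌈(k : ℝ)^2 * (ε + η) / (ε * η)⌉₊ : ℝ) := by positivity
    linarith
  have hn1 : (k : ℝ)^2 * (ε + η) / (ε * η) ≤ (n : ℝ) := by linarith
  have hn1' : (k : ℝ)^2 * (ε + η) ≤ (n : ℝ) * (ε * η) := by
    rwa [div_le_iff₀ (by positivity)] at hn1
  have hεn : (k:ℝ)^2 ≤ ε * n := by nlinarith [sq_nonneg (k:ℝ)]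
  have hηn : (k:ℝ)^2 ≤ η * n := by nlinarith [sq_nonneg (k:ℝ)]
  have hk3 : (3:ℝ) ≤ (k:ℝ) := by exact_mod_cast hk
  have hkk : (k:ℝ) ≤ (k:ℝ)^2 := by nlinarith
  have hnpos : (0:ℝ) < n := by nlinarith
  -- the key inequality
  have hfinal : μ * n * n ≤ (η * n - k) * (ε * n - k) := by
    rw [← mul_le_mul_iff_right₀ hk0]
    rw [show (k:ℝ) * (μ * n * n) = (ε * η) * (n * n) by rw [← hμk]; ring]
    nlinarith [mul_le_mul_of_nonneg_right hn1' hnpos.le, hk3,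
      mul_pos (mul_pos hε hη) (mul_pos hnpos hnpos)]
  -- cast of f.card
  have hfk : (f.card : ℝ) ≤ k := by
    rw [hf]; exact_mod_cast Nat.cast_le.mpr (Nat.sub_le k 2)
  -- Averaging: find a vertex whose neighbourhood covers a μ-fraction of S
  have avg : ∀ S : Finset α, η * n < (S.card : ℝ) →
      ∃ w, w ∉ f ∧ μ * n ≤ (((nbhd G (insert w f) ∩ S)).card : ℝ) := by
    intro S hS
    by_contra hcon
    push_neg at hcon
    -- double counting
    have swap : ∑ w ∈ univ \ f, ((nbhd G (insert w f) ∩ (S \ f)).card)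
        = ∑ v ∈ S \ f, (((univ \ f).filter
            (fun w => v ∈ nbhd G (insert w f))).card) := by
      have h1 : ∀ w : α, (nbhd G (insert w f) ∩ (S \ f)).card
          = ∑ v ∈ S \ f, if v ∈ nbhd G (insert w f) then 1 else 0 := by
        intro w
        rw [Finset.inter_comm, ← Finset.filter_mem_eq_inter, Finset.card_filter]
      simp_rw [h1, Finset.card_filter]
      exact Finset.sum_comm
    -- per-vertex lower bound
    have per : ∀ v ∈ S \ f, (ε * n - k : ℝ)
        ≤ (((univ \ f).filter (fun w => v ∈ nbhd G (insert w f))).card : ℝ) := by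
      intro v hv
      obtain ⟨hvS, hvf⟩ := Finset.mem_sdiff.mp hv
      have hcard : (insert v f).card = k - 1 := by
        rw [Finset.card_insert_of_notMem hvf, hf]; omega
      have hsub : nbhd G (insert v f) \ f
          ⊆ (univ \ f).filter (fun w => v ∈ nbhd G (insert w f)) := by
        intro w hw
        obtain ⟨hw1, hw2⟩ := Finset.mem_sdiff.mp hw
        have hwG : insert w (insert v f) ∈ G := (Finset.mem_filter.mp hw1).2
        refine Finset.mem_filter.mpr ⟨Finset.mem_sdiff.mpr ⟨Finset.mem_univ _, hw2⟩, ?_⟩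
        refine Finset.mem_filter.mpr ⟨Finset.mem_univ _, ?_⟩
        rwa [Finset.insert_comm]
      have h2 : (nbhd G (insert v f)).card ≤ (nbhd G (insert v f) \ f).card + f.card :=
        Finset.card_le_card_sdiff_add_card
      have h3 := hdeg (insert v f) hcard
      have h4 : ((nbhd G (insert v f) \ f).card : ℝ)
          ≤ (((univ \ f).filter (fun w => v ∈ nbhd G (insert w f))).card : ℝ) :=
        Nat.cast_le.mpr (Finset.card_le_card hsub)
      have h2' : ((nbhd G (insert v f)).card : ℝ)
          ≤ ((nbhd G (insert v f) \ f).card : ℝ) + (f.card : ℝ) := by exact_mod_cast h2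
      linarith
    -- lower bound on the total
    have hScard : (η * n - k : ℝ) ≤ ((S \ f).card : ℝ) := by
      have h2 : S.card ≤ (S \ f).card + f.card := Finset.card_le_card_sdiff_add_card
      have h2' : (S.card : ℝ) ≤ ((S \ f).card : ℝ) + (f.card : ℝ) := by exact_mod_cast h2
      linarith
    have hεnk : (0:ℝ) ≤ ε * n - k := by nlinarith
    have hlow : (η * n - k) * (ε * n - k)
        ≤ ∑ v ∈ S \ f, (((univ \ f).filter
            (fun w => v ∈ nbhd G (insert w f))).card : ℝ) := by
      calc (η * n - k) * (ε * n - k) ≤ ((S \ f).card : ℝ) * (ε * n - k) := by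
            apply mul_le_mul_of_nonneg_right hScard hεnk
        _ = ∑ _v ∈ S \ f, (ε * n - k : ℝ) := by rw [Finset.sum_const, nsmul_eq_mul]
        _ ≤ _ := Finset.sum_le_sum per
    -- upper bound on the total via hcon
    have hne : (univ \ f : Finset α).Nonempty := by
      rw [← Finset.card_pos]
      have h2 : n ≤ (univ \ f).card + f.card := by
        simpa [hndef] using (Finset.card_le_card_sdiff_add_card (s := (univ : Finset α)) (t := f))
      have hknlt : (k:ℝ) < n := by
        have : k < n := lt_of_le_of_lt (Nat.le_add_left k _) hn
        exact_mod_cast this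
      have : (0:ℝ) < ((univ \ f).card : ℝ) := by
        have h2' : (n : ℝ) ≤ ((univ \ f).card : ℝ) + (f.card : ℝ) := by exact_mod_cast h2
        linarith
      exact_mod_cast this
    have hupp : (∑ w ∈ univ \ f, (((nbhd G (insert w f) ∩ (S \ f)).card) : ℝ))
        < ((univ \ f).card : ℝ) * (μ * n) := by
      have := Finset.sum_lt_sum_of_nonempty hne
        (f := fun w => (((nbhd G (insert w f) ∩ (S \ f)).card) : ℝ))
        (g := fun _ => μ * n) ?_
      · simpa [Finset.sum_const, nsmul_eq_mul] using this
      · intro w hw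
        have hw2 := (Finset.mem_sdiff.mp hw).2
        have := hcon w hw2
        have hmono : ((nbhd G (insert w f) ∩ (S \ f)).card : ℝ)
            ≤ ((nbhd G (insert w f) ∩ S).card : ℝ) :=
          Nat.cast_le.mpr (Finset.card_le_card
            (Finset.inter_subset_inter (Finset.Subset.refl _) Finset.sdiff_subset))
        show ((nbhd G (insert w f) ∩ (S \ f)).card : ℝ) < μ * n
        linarith
    have hcardle : ((univ \ f).card : ℝ) ≤ (n : ℝ) := by
      exact_mod_cast Finset.card_le_card (Finset.subset_univ _)
    have hswap' : (∑ w ∈ univ \ f, (((nbhd G (insert w f) ∩ (S \ f)).card) : ℝ))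
        = ∑ v ∈ S \ f, (((univ \ f).filter
            (fun w => v ∈ nbhd G (insert w f))).card : ℝ) := by
      exact_mod_cast congrArg Nat.cast swap
    nlinarith [mul_le_mul_of_nonneg_right hcardle (show (0:ℝ) ≤ μ * n by positivity)]
  -- Greedy covering by strong induction on the size bound
  have step : ∀ m : ℕ, ∀ S : Finset α, S.card ≤ m →
      ∃ (t : ℕ) (P : Fin t → Finset α),
        (∀ i, P i ⊆ S) ∧
        (∀ i j, i ≠ j → Disjoint (P i) (P j)) ∧
        (∀ i, ∃ w ∉ f, P i ⊆ nbhd G (insert w f)) ∧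
        (∀ i, μ * n ≤ ((P i).card : ℝ)) ∧
        (((S \ Finset.univ.biUnion P).card : ℝ) ≤ η * n) := by
    intro m
    induction m with
    | zero =>
      intro S hS
      refine ⟨0, Fin.elim0, fun i => i.elim0, fun i => i.elim0, fun i => i.elim0,
        fun i => i.elim0, ?_⟩
      have : S = ∅ := Finset.card_eq_zero.mp (Nat.le_zero.mp hS)
      subst this
      simp only [Finset.empty_sdiff, Finset.card_empty, Nat.cast_zero]
      positivity
    | succ m IH =>
      intro S hS
      by_cases hb : (S.card : ℝ) ≤ η * n
      · refine ⟨0, Fin.elim0, fun i => i.elim0, fun i => i.elim0, fun i => i.elim0,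
          fun i => i.elim0, ?_⟩
        have he : (Finset.univ : Finset (Fin 0)).biUnion (Fin.elim0 : Fin 0 → Finset α) = ∅ := by
          simp [Finset.univ_eq_empty]
        rw [he, Finset.sdiff_empty]
        exact hb
      · push_neg at hb
        obtain ⟨w, hwf, hwcard⟩ := avg S hb
        set A := nbhd G (insert w f) ∩ S with hA
        have hAS : A ⊆ S := Finset.inter_subset_right
        have hAne : A.Nonempty := by
          rw [← Finset.card_pos]
          have : (0:ℝ) < (A.card : ℝ) := lt_of_lt_of_le (by positivity) hwcard
          exact_mod_cast this
        have hless : (S \ A).card ≤ m := by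
          have h1 := Finset.card_sdiff_add_card_eq_card hAS
          have h2 : 0 < A.card := Finset.card_pos.mpr hAne
          omega
        obtain ⟨t, P, hP1, hP2, hP3, hP4, hP5⟩ := IH (S \ A) hless
        refine ⟨t + 1, Fin.cons A P, ?_, ?_, ?_, ?_, ?_⟩
        · intro i
          rcases Fin.eq_zero_or_eq_succ i with rfl | ⟨i', rfl⟩
          · simp only [Fin.cons_zero]; exact hAS
          · simp only [Fin.cons_succ]
            exact (hP1 i').trans Finset.sdiff_subset
        · intro i j hij
          rcases Fin.eq_zero_or_eq_succ i with rfl | ⟨i', rfl⟩ <;>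
            rcases Fin.eq_zero_or_eq_succ j with rfl | ⟨j', rfl⟩
          · exact absurd rfl hij
          · simp only [Fin.cons_zero, Fin.cons_succ]
            exact Finset.disjoint_of_subset_right (hP1 j') disjoint_sdiff_self_right
          · simp only [Fin.cons_zero, Fin.cons_succ]
            exact (Finset.disjoint_of_subset_right (hP1 i') Finset.disjoint_sdiff).symm
          · simp only [Fin.cons_succ]
            exact hP2 i' j' (fun h => hij (congrArg Fin.succ h))
        · intro i
          rcases Fin.eq_zero_or_eq_succ i with rfl | ⟨i', rfl⟩
          · exact ⟨w, hwf, by simp only [Fin.cons_zero]; exact Finset.inter_subset_left⟩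
          · simp only [Fin.cons_succ]; exact hP3 i'
        · intro i
          rcases Fin.eq_zero_or_eq_succ i with rfl | ⟨i', rfl⟩
          · simp only [Fin.cons_zero]; exact hwcard
          · simp only [Fin.cons_succ]; exact hP4 i'
        · have heq : S \ Finset.univ.biUnion (Fin.cons A P)
              = (S \ A) \ Finset.univ.biUnion P := by
            ext a
            simp only [Finset.mem_sdiff, Finset.mem_biUnion, Finset.mem_univ, true_and]
            constructor
            · rintro ⟨haS, hnot⟩
              exact ⟨⟨haS, fun h => hnot ⟨0, by simpa using h⟩⟩,
                fun ⟨j, hj⟩ => hnot ⟨j.succ, by simpa using hj⟩⟩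
            · rintro ⟨⟨haS, haA⟩, hnot⟩
              refine ⟨haS, ?_⟩
              rintro ⟨i, hi⟩
              refine Fin.cases ?_ ?_ i hi
              · intro h; exact haA (by simpa using h)
              · intro j hj; exact hnot ⟨j, by simpa using hj⟩
          rw [heq]
          exact hP5
  -- conclude
  obtain ⟨t, P, hP1, hP2, hP3, hP4, hP5⟩ := step n univ (le_of_eq (by simp [hndef]))
  refine ⟨t, P, hP1, hP2, ?_, ?_, ?_⟩
  · intro i e he hek
    obtain ⟨w', hw'f, hw'⟩ := hP3 i
    refine Finset.mem_filter.mpr ⟨Finset.mem_powersetCard.mpr ⟨Finset.subset_univ _, hek⟩,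
      w', hw'f, he.trans hw'⟩
  · intro i
    simpa [hndef] using hP4 i
  · simpa [hndef] using hP5
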